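/- Let n ≥ 0, F(x) = (1 + x²)^{2n+1} and G(x) = x^{2n+2}. Then for all x, y ∈ ℝ: |G''(x - y)| ≤ (n+1) 2^{2n+1} √(F''(x)) √(F''(y)). -/

import Mathlib

/-- Growth condition C for Model 1: for `F(x) = (1 + x²)^{2n+1}` and
`G(x) = x^{2n+2}` one has
`|G''(x - y)| ≤ (n+1)·2^{2n+1}·√(F''(x))·√(F''(y))` for all `x, y`. -/
theorem model_one_growth_condition
    (n : ℕ) (F G : ℝ → ℝ)
    (hF : F = fun x => (1 + x ^ 2) ^ (2 * n + 1))
    (hG : G = fun x => x ^ (2 * n + 2)) :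
    ∀ x y : ℝ,
      |deriv (deriv G) (x - y)|
        ≤ (n + 1) * 2 ^ (2 * n + 1) *
          Real.sqrt (deriv (deriv F) x) * Real.sqrt (deriv (deriv F) y) := by
  have hG1 : deriv G = fun z : ℝ => ((2*n+2 : ℕ) : ℝ) * z ^ (2*n+1) := by
    funext z
    rw [hG]
    simpa using deriv_pow (2*n+2) (x := z)
  have hG2 : ∀ z : ℝ, deriv (deriv G) z = ((2*n+2 : ℕ) : ℝ) * (((2*n+1 : ℕ) : ℝ) * z ^ (2*n)) := by
    intro z
    rw [hG1]
    rw [deriv_const_mul _ (by fun_prop)]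
    simp [deriv_pow]
  have hsq : ∀ x : ℝ, HasDerivAt (fun x : ℝ => 1 + x ^ 2) (2*x) x := by
    intro x
    simpa using ((hasDerivAt_pow 2 x).const_add 1)
  have hF1 : deriv F = fun x : ℝ => ((2*n+1 : ℕ) : ℝ) * (1 + x ^ 2) ^ (2*n) * (2*x) := by
    funext x
    rw [hF]
    have := (hsq x).pow (2*n+1)
    simpa using this.deriv
  have hF2 : ∀ x : ℝ, deriv (deriv F) x =
      (((2*n+1 : ℕ) : ℝ) * (((2*n : ℕ) : ℝ) * (1 + x ^ 2) ^ (2*n-1) * (2*x))) * (2*x)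
      + ((2*n+1 : ℕ) : ℝ) * (1 + x ^ 2) ^ (2*n) * 2 := by
    intro x
    have hA : HasDerivAt (fun x : ℝ => ((2*n+1 : ℕ) : ℝ) * (1 + x ^ 2) ^ (2*n))
        (((2*n+1 : ℕ) : ℝ) * (((2*n : ℕ) : ℝ) * (1 + x ^ 2) ^ (2*n-1) * (2*x))) x :=
      ((hsq x).pow (2*n)).const_mul _
    have hB : HasDerivAt (fun x : ℝ => 2*x) (2:ℝ) x := by
      simpa using (hasDerivAt_id x).const_mul (2:ℝ)
    rw [hF1]
    simpa [Pi.mul_def] using (hA.mul hB).deriv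
  intro x y
  have hlow : ∀ t : ℝ, 2 * ((2*n+1 : ℕ) : ℝ) * ((1 + t ^ 2) ^ n) ^ 2 ≤ deriv (deriv F) t := by
    intro t
    rw [hF2 t]
    have hp : (0:ℝ) ≤ ((2*n+1 : ℕ) : ℝ) * ((2*n : ℕ) : ℝ) * (1 + t ^ 2) ^ (2*n-1) * (2*t) ^ 2 := by
      positivity
    have h2 : ((1 + t ^ 2) ^ n) ^ 2 = (1 + t ^ 2) ^ (2*n) := by
      rw [← pow_mul]; ring_nf
    nlinarith [hp]
  have hsqrt : ∀ t : ℝ, Real.sqrt (2 * ((2*n+1 : ℕ) : ℝ)) * (1 + t ^ 2) ^ n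
      ≤ Real.sqrt (deriv (deriv F) t) := by
    intro t
    have h := Real.sqrt_le_sqrt (hlow t)
    calc Real.sqrt (2 * ((2*n+1 : ℕ) : ℝ)) * (1 + t ^ 2) ^ n
        = Real.sqrt (2 * ((2*n+1 : ℕ) : ℝ) * ((1 + t ^ 2) ^ n) ^ 2) := by
          rw [show Real.sqrt (2 * ((2*n+1 : ℕ) : ℝ) * ((1 + t ^ 2) ^ n) ^ 2)
                = Real.sqrt (2 * ((2*n+1 : ℕ) : ℝ)) * Real.sqrt (((1 + t ^ 2) ^ n) ^ 2)
              from Real.sqrt_mul (by positivity) _,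
             Real.sqrt_sq (by positivity)]
      _ ≤ _ := h
  set c := Real.sqrt (2 * ((2*n+1 : ℕ) : ℝ)) with hc
  have hc2 : c ^ 2 = 2 * ((2*n+1 : ℕ) : ℝ) := Real.sq_sqrt (by positivity)
  have hx := hsqrt x
  have hy := hsqrt y
  have hK : (0:ℝ) ≤ ((n:ℝ) + 1) * 2 ^ (2*n+1) := by positivity
  rw [hG2 (x - y)]
  have habs : |((2*n+2 : ℕ) : ℝ) * (((2*n+1 : ℕ) : ℝ) * (x - y) ^ (2*n))|
      = ((2*n+2 : ℕ) : ℝ) * (((2*n+1 : ℕ) : ℝ) * ((x - y) ^ 2) ^ n) := by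
    rw [abs_of_nonneg]
    · rw [← pow_mul]
    · have h0 : (0:ℝ) ≤ (x - y) ^ (2*n) := by
        rw [pow_mul]; positivity
      positivity
  rw [habs]
  have hkey : ((x - y) ^ 2) ^ n ≤ 2 ^ (2*n+1) * ((1 + x ^ 2) ^ n * (1 + y ^ 2) ^ n) := by
    have h1 : (x - y) ^ 2 ≤ 2 * ((1 + x ^ 2) * (1 + y ^ 2)) := by
      nlinarith [sq_nonneg (x+y), sq_nonneg (x*y), sq_nonneg (x*y - 1)]
    have h2 : ((x - y) ^ 2) ^ n ≤ (2 * ((1 + x ^ 2) * (1 + y ^ 2))) ^ n :=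
      pow_le_pow_left₀ (sq_nonneg _) h1 n
    have h3 : (2 * ((1 + x ^ 2) * (1 + y ^ 2))) ^ n
        = 2 ^ n * ((1 + x ^ 2) ^ n * (1 + y ^ 2) ^ n) := by
      rw [mul_pow, mul_pow]
    have h4 : (2:ℝ) ^ n ≤ 2 ^ (2*n+1) := by
      apply pow_le_pow_right₀ (by norm_num); omega
    calc ((x - y) ^ 2) ^ n ≤ 2 ^ n * ((1 + x ^ 2) ^ n * (1 + y ^ 2) ^ n) := by rw [← h3]; exact h2
      _ ≤ 2 ^ (2*n+1) * ((1 + x ^ 2) ^ n * (1 + y ^ 2) ^ n) :=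
          mul_le_mul_of_nonneg_right h4 (by positivity)
  have hstep : ((n:ℝ) + 1) * 2 ^ (2*n+1) * (c * (1 + x ^ 2) ^ n) * (c * (1 + y ^ 2) ^ n)
      ≤ ((n:ℝ) + 1) * 2 ^ (2*n+1) * Real.sqrt (deriv (deriv F) x) * Real.sqrt (deriv (deriv F) y) := by
    have h1 : ((n:ℝ) + 1) * 2 ^ (2*n+1) * (c * (1 + x ^ 2) ^ n)
        ≤ ((n:ℝ) + 1) * 2 ^ (2*n+1) * Real.sqrt (deriv (deriv F) x) :=
      mul_le_mul_of_nonneg_left hx hK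
    exact mul_le_mul h1 hy (by positivity) (by positivity)
  refine le_trans ?_ hstep
  have heq : ((n:ℝ) + 1) * 2 ^ (2*n+1) * (c * (1 + x ^ 2) ^ n) * (c * (1 + y ^ 2) ^ n)
      = ((n:ℝ) + 1) * 2 ^ (2*n+1) * (c^2) * ((1 + x ^ 2) ^ n * (1 + y ^ 2) ^ n) := by ring
  rw [heq, hc2]
  push_cast
  calc (2*(n:ℝ)+2) * ((2*(n:ℝ)+1) * ((x - y) ^ 2) ^ n)
      = (2*(n:ℝ)+2) * (2*(n:ℝ)+1) * ((x - y) ^ 2) ^ n := by ring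
    _ ≤ (2*(n:ℝ)+2) * (2*(n:ℝ)+1) * (2 ^ (2*n+1) * ((1 + x ^ 2) ^ n * (1 + y ^ 2) ^ n)) :=
        mul_le_mul_of_nonneg_left hkey (by positivity)
    _ = ((n:ℝ) + 1) * 2 ^ (2*n+1) * (2 * (2*(n:ℝ)+1)) * ((1 + x ^ 2) ^ n * (1 + y ^ 2) ^ n) := by
        ring
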